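/- arXiv:2510.00576 — 2 statements merged into one kernel-verified Lean document; each statement's English description precedes it below -/
import Mathlib

section
/- Let ℓ, d ≥ 2 and let b₁, …, b_d ∈ ℝ^m be vectors such that b₂ − b₁, …, b_d − b₁ span a (d−1)-dimensional subspace of ℝ^m. Let B(bᵢ) denote the ℓ × mℓ block-diagonal matrix with ℓ copies of the row vector bᵢᵀ on the diagonal. Then the dℓ × (ℓ + mℓ) matrix M whose i-th block row is (E_ℓ | B(bᵢ)) (where E_ℓ is the ℓ×ℓ identity) has rank dℓ. -/
/-- the stacked matrix `M` with block rows `(E_ℓ | B(bᵢ))` has rank `dℓ`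
provided `b₂ - b₁, …, b_d - b₁` span a `(d-1)`-dimensional subspace. -/
theorem stmt4 (l d m : ℕ) (hl : 2 ≤ l) (hd : 2 ≤ d)
    (b : Fin d → Fin m → ℝ)
    (hspan : Module.finrank ℝ (Submodule.span ℝ
        (Set.range fun i : Fin d => b i - b ⟨0, by omega⟩)) = d - 1)
    (M : Matrix (Fin d × Fin l) (Fin l ⊕ (Fin l × Fin m)) ℝ)
    (hM1 : ∀ (i : Fin d) (r c : Fin l),
      M (i, r) (Sum.inl c) = if r = c then 1 else 0)
    (hM2 : ∀ (i : Fin d) (r c : Fin l) (j : Fin m),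
      M (i, r) (Sum.inr (c, j)) = if r = c then b i j else 0) :
    M.rank = d * l := by
  classical
  have hz : 0 < d := by omega
  set z : Fin d := ⟨0, hz⟩ with hzdef
  -- span over the subtype equals the span in the hypothesis
  have hsp : Submodule.span ℝ (Set.range fun i : {i : Fin d // i ≠ z} => b i.1 - b z)
      = Submodule.span ℝ (Set.range fun i : Fin d => b i - b z) := by
    apply le_antisymm
    · exact Submodule.span_mono (by rintro _ ⟨i, rfl⟩; exact ⟨i.1, rfl⟩)
    · rw [Submodule.span_le]
      rintro _ ⟨i, rfl⟩
      by_cases hi : i = z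
      · subst hi; simp
      · exact Submodule.subset_span ⟨⟨i, hi⟩, rfl⟩
  have hcard : Fintype.card {i : Fin d // i ≠ z} = d - 1 := by
    simp [Fintype.card_subtype_compl, Fintype.card_subtype_eq]
  have hli : LinearIndependent ℝ (fun i : {i : Fin d // i ≠ z} => b i.1 - b z) := by
    rw [linearIndependent_iff_card_eq_finrank_span, hcard, Set.finrank, hsp]
    exact hspan.symm
  have hrows : LinearIndependent ℝ M := by
    refine Fintype.linearIndependent_iff.mpr ?_
    intro g hg
    have h1 : ∀ c : Fin l, ∑ i : Fin d, g (i, c) = 0 := by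
      intro c
      have := congrFun hg (Sum.inl c)
      simpa [Fintype.sum_prod_type, hM1, mul_ite] using this
    have h2 : ∀ (c : Fin l) (j : Fin m), ∑ i : Fin d, g (i, c) * b i j = 0 := by
      intro c j
      have := congrFun hg (Sum.inr (c, j))
      simpa [Fintype.sum_prod_type, hM2, mul_ite] using this
    rintro ⟨i, c⟩
    have hsum0 : ∑ i : Fin d, g (i, c) • (b i - b z) = 0 := by
      have e1 : ∑ i : Fin d, g (i, c) • (b i - b z)
          = (∑ i : Fin d, g (i, c) • b i) - (∑ i : Fin d, g (i, c)) • b z := by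
        simp [smul_sub, Finset.sum_sub_distrib, Finset.sum_smul]
      rw [e1, h1 c, zero_smul, sub_zero]
      funext j
      simpa using h2 c j
    have hsub : ∑ i : {i : Fin d // i ≠ z}, g (i.1, c) • (b i.1 - b z) = 0 := by
      rw [← Finset.sum_subtype (Finset.univ.erase z)
        (fun x => by simp [Finset.mem_erase]) (fun i => g (i, c) • (b i - b z))]
      rw [Finset.sum_erase _ (by simp)]
      exact hsum0
    have key : ∀ i, i ≠ z → g (i, c) = 0 := by
      intro i hi
      exact Fintype.linearIndependent_iff.mp hli (fun i => g (i.1, c)) hsub ⟨i, hi⟩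
    by_cases hi : i = z
    · subst hi
      have := h1 c
      rw [← Finset.sum_erase_add _ _ (Finset.mem_univ z)] at this
      rw [Finset.sum_eq_zero (fun x hx => key x (Finset.mem_erase.mp hx).1),
        zero_add] at this
      exact this
    · exact key i hi
  rw [hrows.rank_matrix]
  simp [mul_comm]
end

section
/- Let ℓ ≥ 3 and g(x) = (−x², −x³, 0, …, 0) : ℝ → ℝ^ℓ. Let Σ = {a ∈ ℝ^ℓ : x ↦ g(x) + (a₁x, …, a_ℓx) is not injective}. Then Σ contains a set of the form U′ × {0} ⊂ ℝ² × ℝ^{ℓ−2} with U′ a nonempty open subset of ℝ², and hence Σ does not have 2-dimensional Hausdorff measure zero in ℝ^ℓ. -/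
open MeasureTheory

lemma embed_isometry (l : ℕ) (hl : 2 ≤ l) :
    Isometry (fun (v : Fin 2 → ℝ) (i : Fin l) =>
      if h : (i : ℕ) < 2 then v ⟨i, h⟩ else 0) := by
  set E : (Fin 2 → ℝ) → (Fin l → ℝ) :=
    fun v i => if h : (i : ℕ) < 2 then v ⟨i, h⟩ else 0 with hE
  apply Isometry.of_dist_eq
  intro v w
  show dist (E v) (E w) = dist v w
  apply le_antisymm
  · apply (dist_pi_le_iff dist_nonneg).2
    intro i
    by_cases h : (i : ℕ) < 2
    · have h1 : E v i = v ⟨i, h⟩ := by exact dif_pos h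
      have h2 : E w i = w ⟨i, h⟩ := by exact dif_pos h
      rw [h1, h2]
      exact dist_le_pi_dist v w ⟨i, h⟩
    · have h1 : E v i = 0 := by exact dif_neg h
      have h2 : E w i = 0 := by exact dif_neg h
      rw [h1, h2]
      simpa using dist_nonneg
  · apply (dist_pi_le_iff dist_nonneg).2
    intro j
    have hj : (j : ℕ) < l := lt_of_lt_of_le j.2 hl
    have h1 : v j = E v ⟨j, hj⟩ := by
      show v j = if h : (j : ℕ) < 2 then v ⟨j, h⟩ else 0
      rw [dif_pos j.2]
    have h2 : w j = E w ⟨j, hj⟩ := by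
      show w j = if h : (j : ℕ) < 2 then w ⟨j, h⟩ else 0
      rw [dif_pos j.2]
    rw [h1, h2]
    exact dist_le_pi_dist (E v) (E w) ⟨j, hj⟩

/-- for `g(x) = (-x², -x³, 0, …, 0) : ℝ → ℝ^ℓ`, the set `Σ` of linear
perturbations `a` for which `g + a` is not injective contains a set `U′ × {0}` with `U′`
nonempty open in ℝ², and hence `Σ` does not have 2-dimensional Hausdorff measure zero. -/
theorem stmt10 (l : ℕ) (hl : 3 ≤ l)
    (g : ℝ → Fin l → ℝ)
    (hg : g = fun (x : ℝ) (i : Fin l) => if (i : ℕ) = 0 then -x ^ 2 else if (i : ℕ) = 1 then -x ^ 3 else 0)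
    (S : Set (Fin l → ℝ))
    (hS : S = {a : Fin l → ℝ | ¬ Function.Injective (fun x : ℝ => g x + fun i => a i * x)}) :
    (∃ U' : Set (ℝ × ℝ), IsOpen U' ∧ U'.Nonempty ∧
      ∀ u ∈ U',
        (fun i : Fin l => if (i : ℕ) = 0 then u.1 else if (i : ℕ) = 1 then u.2 else 0) ∈ S) ∧
    μH[2] S ≠ 0 := by
  -- key membership lemma
  have key : ∀ p q : ℝ, 3 / 4 * p ^ 2 < q →
      (fun i : Fin l => if (i : ℕ) = 0 then p else if (i : ℕ) = 1 then q else 0) ∈ S := by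
    intro p q hpq
    set a : Fin l → ℝ := fun i => if (i : ℕ) = 0 then p else if (i : ℕ) = 1 then q else 0 with ha
    subst hS hg
    intro hinj
    set d := Real.sqrt (4 * q - 3 * p ^ 2) with hd
    have hd2 : d ^ 2 = 4 * q - 3 * p ^ 2 := Real.sq_sqrt (by nlinarith)
    have hdpos : 0 < d := Real.sqrt_pos.2 (by nlinarith)
    set x := (p + d) / 2 with hx
    set y := (p - d) / 2 with hy
    have hxy : x ≠ y := by
      rw [hx, hy]
      intro h
      exact hdpos.ne' (by linarith)
    apply hxy
    apply hinj
    funext i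
    simp only [Pi.add_apply]
    rcases Nat.lt_or_ge (i : ℕ) 2 with hi | hi
    · interval_cases h : (i : ℕ)
      · simp only [a, h]
        norm_num
        rw [hx, hy]
        ring
      · simp only [a, h]
        norm_num
        rw [hx, hy]
        nlinarith [hd2, hdpos]
    · have h0 : (i : ℕ) ≠ 0 := by omega
      have h1 : (i : ℕ) ≠ 1 := by omega
      simp [a, h0, h1]
  constructor
  · refine ⟨{u : ℝ × ℝ | 3 / 4 * u.1 ^ 2 < u.2}, ?_, ⟨(0, 1), by norm_num⟩, ?_⟩
    · exact isOpen_lt (by fun_prop) continuous_snd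
    · intro u hu
      exact key u.1 u.2 hu
  · -- second part: use isometric embedding of Fin 2 → ℝ
    set e : (Fin 2 → ℝ) → (Fin l → ℝ) := fun v i => if h : (i : ℕ) < 2 then v ⟨i, h⟩ else 0
      with he
    have hiso : Isometry e := embed_isometry l (by omega)
    set B : Set (Fin 2 → ℝ) := {v | 3 / 4 * (v 0) ^ 2 < v 1} with hB
    have hBopen : IsOpen B :=
      isOpen_lt (by fun_prop) (continuous_apply 1)
    have hBne : B.Nonempty := ⟨![0, 1], by norm_num [hB]⟩
    have hsub : e '' B ⊆ S := by
      rintro _ ⟨v, hv, rfl⟩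
      have hev : e v = (fun i : Fin l =>
          if (i : ℕ) = 0 then v 0 else if (i : ℕ) = 1 then v 1 else 0) := by
        funext i
        simp only [he]
        by_cases h0 : (i : ℕ) = 0
        · have hlt : (i : ℕ) < 2 := by omega
          have : (⟨(i : ℕ), hlt⟩ : Fin 2) = 0 := by ext; simp [h0]
          simp [hlt, h0, this]
        · by_cases h1 : (i : ℕ) = 1
          · have hlt : (i : ℕ) < 2 := by omega
            have : (⟨(i : ℕ), hlt⟩ : Fin 2) = 1 := by ext; simp [h1]
            simp [hlt, h0, h1, this]
          · have hlt : ¬ (i : ℕ) < 2 := by omega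
            simp [hlt, h0, h1]
      rw [hev]
      exact key (v 0) (v 1) hv
    have himg : μH[2] (e '' B) = μH[2] B := hiso.hausdorffMeasure_image (Or.inl (by norm_num)) B
    have hvol : μH[(2 : ℝ)] B = volume B := by
      have h := hausdorffMeasure_pi_real (ι := Fin 2)
      rw [Fintype.card_fin] at h
      norm_num at h
      rw [h]
    have hpos : 0 < volume B := hBopen.measure_pos volume hBne
    have h1 : 0 < μH[2] (e '' B) := by rw [himg, hvol]; exact hpos
    exact (lt_of_lt_of_le h1 (measure_mono hsub)).ne'
end
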